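/- arXiv:1707.01436 — 4 statements merged into one kernel-verified Lean document; each statement's English description precedes it below -/
import Mathlib

section
/- Let σ : ℝ → ℝ be twice continuously differentiable, let r, q ∈ ℝ, T > 0, and define β(u) = (1/2) σ(u)² u. Let V : (0,∞) × [0,T] → ℝ be such that all partial derivatives ∂_t V, ∂_S V, ∂_S² V, ∂_S³ V, ∂_S⁴ V and the mixed derivative ∂_t ∂_S² V exist and are continuous, and suppose V solves the nonlinear Black–Scholes equation ∂_t V + (1/2) σ(S ∂_S² V)² S² ∂_S² V + (r − q) S ∂_S V − r V = 0 for all S > 0 and t ∈ [0,T). Define H(x,τ) := S ∂_S² V(S,t) with S = eˣ and t = T − τ. Then H satisfies the Gamma equation ∂_τ H = ∂_x² β(H) + ∂_x β(H) + (r − q) ∂_x H − q H for all x ∈ ℝ and τ ∈ (0,T]. -/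
/-!
Differentiating the Black–Scholes equation twice in `S` expresses `∂_S² ∂_t V` through
`S`-derivatives of `V`, and `∂_τ H = -S ∂_t ∂_S² V`; so the theorem rests on the exchange
`∂_S² ∂_t V = ∂_t ∂_S² V`, where only `∂_t ∂_S² V` is known to be continuous. Integrating
`∂_S² V(·, t) - ∂_S² V(·, t₀) = ∫_{t₀}^t ∂_t ∂_S² V` twice in `S` shows that, up to a term affine in
`S`, `V(S, t)` is a triple integral of the mixed derivative, from which `∂_t V(·, t₀)` is seen to be
twice differentiable with the right second derivative. The rest is calculus in logarithmic
coordinates: for `S = eˣ` one has `S ∂_S² (S φ) = (∂_x² + ∂_x) φ`, which turns `S ∂_S²` of the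
spatial Black–Scholes operator into the spatial Gamma operator.
-/

open Set Filter Topology Function MeasureTheory intervalIntegral
open scoped Interval

theorem intervalIntegral_integral_swap_of_continuous {F : ℝ → ℝ → ℝ}
    (hF : Continuous (uncurry F)) (a b c d : ℝ) :
    ∫ x in a..b, ∫ y in c..d, F x y = ∫ y in c..d, ∫ x in a..b, F x y := by
  have hint :
      Integrable (uncurry F) ((volume.restrict (Ι a b)).prod (volume.restrict (Ι c d))) := by
    rw [Measure.prod_restrict]
    exact (hF.continuousOn.integrableOn_compact (isCompact_uIcc.prod isCompact_uIcc)).mono_set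
      (prod_mono uIoc_subset_uIcc uIoc_subset_uIcc)
  simp only [intervalIntegral_eq_integral_uIoc, smul_eq_mul, MeasureTheory.integral_const_mul]
  rw [integral_integral_swap hint]
  split_ifs <;> ring

theorem hasDerivAt_integral_intervalIntegral_of_continuous {F : ℝ → ℝ → ℝ}
    (hF : Continuous (uncurry F)) (a b t₀ t : ℝ) :
    HasDerivAt (fun s => ∫ x in a..b, ∫ u in t₀..s, F x u) (∫ x in a..b, F x t) t := by
  simp only [intervalIntegral_integral_swap_of_continuous hF a b t₀]
  exact (continuous_parametric_intervalIntegral_of_continuous' (f := fun u x => F x u)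
    (hF.comp continuous_swap) a b |>.integral_hasStrictDerivAt t₀ t).hasDerivAt

theorem exists_continuous_eqOn_Icc_prod {F : ℝ × ℝ → ℝ} {a b c d : ℝ} (hab : a ≤ b) (hcd : c ≤ d)
    (hF : ContinuousOn F (Icc a b ×ˢ Icc c d)) :
    ∃ K : ℝ → ℝ → ℝ, Continuous (uncurry K) ∧ ∀ S ∈ Icc a b, ∀ t ∈ Icc c d, K S t = F (S, t) := by
  refine ⟨fun S t => F (projIcc a b hab S, projIcc c d hcd t),
    hF.comp_continuous (by fun_prop) fun p => ⟨(projIcc a b hab p.1).2, (projIcc c d hcd p.2).2⟩,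
    fun S hS t ht => ?_⟩
  simp only [projIcc_of_mem hab hS, projIcc_of_mem hcd ht]

theorem continuous_uncurry_intervalIntegral_left {K : ℝ → ℝ → ℝ} (hK : Continuous (uncurry K))
    (a : ℝ) : Continuous (uncurry fun w u => ∫ w' in a..w, K w' u) :=
  (continuous_parametric_primitive_of_continuous (f := fun u w' => K w' u)
    (hK.comp continuous_swap)).comp continuous_swap

section MixedPartials

variable {f K : ℝ → ℝ → ℝ} {a b c d S₀ t₀ : ℝ}

theorem deriv_deriv_sub_eq_integral (hK : Continuous (uncurry K))
    (hfK : ∀ S ∈ Icc a b, ∀ t ∈ Icc c d,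
      HasDerivAt (fun t => deriv (deriv fun S => f S t) S) (K S t) t)
    (ht₀ : t₀ ∈ Icc c d) {S t : ℝ} (hS : S ∈ Icc a b) (ht : t ∈ Icc c d) :
    deriv (deriv fun S => f S t) S - deriv (deriv fun S => f S t₀) S = ∫ u in t₀..t, K S u :=
  (integral_eq_sub_of_hasDerivAt (fun u hu => hfK S hS u (uIcc_subset_Icc ht₀ ht hu))
    ((hK.uncurry_left S).intervalIntegrable _ _)).symm

theorem deriv_sub_deriv_eq_integral_integral (hK : Continuous (uncurry K))
    (hfK : ∀ S ∈ Icc a b, ∀ t ∈ Icc c d,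
      HasDerivAt (fun t => deriv (deriv fun S => f S t) S) (K S t) t)
    (hfSS : ∀ S ∈ Icc a b, ∀ t ∈ Icc c d, DifferentiableAt ℝ (deriv fun S => f S t) S)
    (hS₀ : S₀ ∈ Icc a b) (ht₀ : t₀ ∈ Icc c d) {S t : ℝ} (hS : S ∈ Icc a b) (ht : t ∈ Icc c d) :
    (deriv (fun S => f S t) S - deriv (fun S => f S t₀) S) -
        (deriv (fun S => f S t) S₀ - deriv (fun S => f S t₀) S₀) =
      ∫ u in t₀..t, ∫ w in S₀..S, K w u := by
  rw [← intervalIntegral_integral_swap_of_continuous hK]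
  refine (integral_eq_sub_of_hasDerivAt
    (f := fun w => deriv (fun S => f S t) w - deriv (fun S => f S t₀) w) (fun w hw => ?_)
    ((continuous_parametric_intervalIntegral_of_continuous' hK t₀ t).intervalIntegrable _ _)).symm
  have hw' : w ∈ Icc a b := uIcc_subset_Icc hS₀ hS hw
  rw [← deriv_deriv_sub_eq_integral hK hfK ht₀ hw' ht]
  exact (hfSS w hw' t ht).hasDerivAt.sub (hfSS w hw' t₀ ht₀).hasDerivAt

theorem sub_sub_eq_integral_integral_integral (hK : Continuous (uncurry K))
    (hfK : ∀ S ∈ Icc a b, ∀ t ∈ Icc c d,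
      HasDerivAt (fun t => deriv (deriv fun S => f S t) S) (K S t) t)
    (hfS : ∀ S ∈ Icc a b, ∀ t ∈ Icc c d, DifferentiableAt ℝ (fun S => f S t) S)
    (hfSS : ∀ S ∈ Icc a b, ∀ t ∈ Icc c d, DifferentiableAt ℝ (deriv fun S => f S t) S)
    (hS₀ : S₀ ∈ Icc a b) (ht₀ : t₀ ∈ Icc c d) {S t : ℝ} (hS : S ∈ Icc a b) (ht : t ∈ Icc c d) :
    (f S t - f S t₀) - (f S₀ t - f S₀ t₀) -
        (S - S₀) * (deriv (fun S => f S t) S₀ - deriv (fun S => f S t₀) S₀) =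
      ∫ w in S₀..S, ∫ u in t₀..t, ∫ w' in S₀..w, K w' u := by
  set κ := deriv (fun S => f S t) S₀ - deriv (fun S => f S t₀) S₀
  have hM := continuous_uncurry_intervalIntegral_left hK S₀
  rw [integral_eq_sub_of_hasDerivAt (f := fun w => (f w t - f w t₀) - (w - S₀) * κ)
    (fun w hw => ?_)
    ((continuous_parametric_intervalIntegral_of_continuous' hM t₀ t).intervalIntegrable _ _)]
  · ring
  have hw' : w ∈ Icc a b := uIcc_subset_Icc hS₀ hS hw
  rw [← deriv_sub_deriv_eq_integral_integral hK hfK hfSS hS₀ ht₀ hw' ht]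
  exact (((hfS w hw' t ht).hasDerivAt.sub (hfS w hw' t₀ ht₀).hasDerivAt).sub
    (((hasDerivAt_id w).sub_const S₀).mul_const κ)).congr_deriv (by rw [one_mul])

theorem exists_deriv_partial_eq_integral_integral_add (hK : Continuous (uncurry K))
    (hfK : ∀ S ∈ Icc a b, ∀ t ∈ Icc c d,
      HasDerivAt (fun t => deriv (deriv fun S => f S t) S) (K S t) t)
    (hfS : ∀ S ∈ Icc a b, ∀ t ∈ Icc c d, DifferentiableAt ℝ (fun S => f S t) S)
    (hfSS : ∀ S ∈ Icc a b, ∀ t ∈ Icc c d, DifferentiableAt ℝ (deriv fun S => f S t) S)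
    (hft : ∀ S ∈ Icc a b, DifferentiableAt ℝ (fun t => f S t) t₀)
    (hS₀ : S₀ ∈ Ico a b) (hcd : c < d) (ht₀ : t₀ ∈ Icc c d) :
    ∃ κ, ∀ S ∈ Icc a b, deriv (fun t => f S t) t₀ =
      deriv (fun t => f S₀ t) t₀ + (∫ w in S₀..S, ∫ w' in S₀..w, K w' t₀) + (S - S₀) * κ := by
  have hS₀' : S₀ ∈ Icc a b := Ico_subset_Icc_self hS₀
  have hb : b ∈ Icc a b := right_mem_Icc.2 (hS₀.1.trans hS₀.2.le)
  have hM := continuous_uncurry_intervalIntegral_left hK S₀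
  set P : ℝ → ℝ := fun S => ∫ w in S₀..S, ∫ w' in S₀..w, K w' t₀
  set E : ℝ → ℝ → ℝ := fun S t =>
    f S t - f S₀ t - ∫ w in S₀..S, ∫ u in t₀..t, ∫ w' in S₀..w, K w' u
  have hE : ∀ S ∈ Icc a b, HasDerivAt (E S)
      (deriv (fun t => f S t) t₀ - deriv (fun t => f S₀ t) t₀ - P S) t₀ := fun S hS =>
    ((hft S hS).hasDerivAt.sub (hft S₀ hS₀').hasDerivAt).sub
      (hasDerivAt_integral_intervalIntegral_of_continuous hM S₀ S t₀ t₀)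
  -- `E S t` is affine in `S` with a slope depending on `t` alone, so `S = b` determines the slope.
  have hrep : ∀ S ∈ Icc a b, ∀ t ∈ Icc c d, E S t = f S t₀ - f S₀ t₀ +
      (S - S₀) * (deriv (fun S => f S t) S₀ - deriv (fun S => f S t₀) S₀) := fun S hS t ht => by
    have := sub_sub_eq_integral_integral_integral hK hfK hfS hfSS hS₀' ht₀ hS ht
    simp only [E]
    linarith
  refine ⟨(deriv (fun t => f b t) t₀ - deriv (fun t => f S₀ t) t₀ - P b) / (b - S₀),
    fun S hS => ?_⟩
  have h0 : HasDerivWithinAt (fun t => (b - S₀) * E S t - (S - S₀) * E b t) 0 (Icc c d) t₀ :=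
    (hasDerivWithinAt_const t₀ _ ((b - S₀) * E S t₀ - (S - S₀) * E b t₀)).congr_of_mem
      (fun t ht => by rw [hrep S hS t ht, hrep b hb t ht, hrep S hS t₀ ht₀, hrep b hb t₀ ht₀]; ring)
      ht₀
  have h1 := (((hE S hS).const_mul (b - S₀)).sub ((hE b hb).const_mul (S - S₀))).hasDerivWithinAt
    (s := Icc c d)
  have hslope := (uniqueDiffOn_Icc hcd t₀ ht₀).eq_deriv _ h1 h0
  have hbS₀ : b - S₀ ≠ 0 := (sub_pos.2 hS₀.2).ne'
  field_simp
  linarith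

theorem hasDerivAt_deriv_partial_comm_of_continuous (hK : Continuous (uncurry K))
    (hfK : ∀ S ∈ Icc a b, ∀ t ∈ Icc c d,
      HasDerivAt (fun t => deriv (deriv fun S => f S t) S) (K S t) t)
    (hfS : ∀ S ∈ Icc a b, ∀ t ∈ Icc c d, DifferentiableAt ℝ (fun S => f S t) S)
    (hfSS : ∀ S ∈ Icc a b, ∀ t ∈ Icc c d, DifferentiableAt ℝ (deriv fun S => f S t) S)
    (hft : ∀ S ∈ Icc a b, DifferentiableAt ℝ (fun t => f S t) t₀)
    (hS₀ : S₀ ∈ Ioo a b) (hcd : c < d) (ht₀ : t₀ ∈ Icc c d) :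
    HasDerivAt (deriv fun S => deriv (fun t => f S t) t₀) (K S₀ t₀) S₀ := by
  obtain ⟨κ, hκ⟩ := exists_deriv_partial_eq_integral_integral_add hK hfK hfS hfSS hft
    (Ioo_subset_Ico_self hS₀) hcd ht₀
  have hM := continuous_uncurry_intervalIntegral_left hK S₀
  have hP : ∀ S, HasDerivAt (fun S => ∫ w in S₀..S, ∫ w' in S₀..w, K w' t₀)
      (∫ w' in S₀..S, K w' t₀) S := fun S =>
    ((hM.uncurry_right t₀).integral_hasStrictDerivAt S₀ S).hasDerivAt
  have hg : deriv (fun S => deriv (fun t => f S t) t₀) =ᶠ[𝓝 S₀]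
      fun S => (∫ w' in S₀..S, K w' t₀) + κ := by
    refine EventuallyEq.deriv (eventually_of_mem (Ioo_mem_nhds hS₀.1 hS₀.2)
      fun S hS => hκ S (Ioo_subset_Icc_self hS)) |>.trans (Eventually.of_forall fun S => ?_)
    exact (((hasDerivAt_const S _).add (hP S)).add
      (((hasDerivAt_id S).sub_const S₀).mul_const κ)).deriv.trans (by ring)
  exact (((hK.uncurry_right t₀).integral_hasStrictDerivAt S₀ S₀).hasDerivAt.add_const κ
    ).congr_of_eventuallyEq hg

theorem hasDerivAt_deriv_partial_comm
    (hfS : ∀ S ∈ Icc a b, ∀ t ∈ Icc c d, DifferentiableAt ℝ (fun S => f S t) S)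
    (hfSS : ∀ S ∈ Icc a b, ∀ t ∈ Icc c d, DifferentiableAt ℝ (deriv fun S => f S t) S)
    (hft : ∀ S ∈ Icc a b, DifferentiableAt ℝ (fun t => f S t) t₀)
    (hftSS : ∀ S ∈ Icc a b, ∀ t ∈ Icc c d,
      DifferentiableAt ℝ (fun t => deriv (deriv fun S => f S t) S) t)
    (hcont : ContinuousOn (fun p : ℝ × ℝ => deriv (fun t => deriv (deriv fun S => f S t) p.1) p.2)
      (Icc a b ×ˢ Icc c d))
    (hS₀ : S₀ ∈ Ioo a b) (hcd : c < d) (ht₀ : t₀ ∈ Icc c d) :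
    HasDerivAt (deriv fun S => deriv (fun t => f S t) t₀)
      (deriv (fun t => deriv (deriv fun S => f S t) S₀) t₀) S₀ := by
  obtain ⟨K, hK, hKeq⟩ := exists_continuous_eqOn_Icc_prod (hS₀.1.trans hS₀.2).le hcd.le hcont
  have hfK : ∀ S ∈ Icc a b, ∀ t ∈ Icc c d,
      HasDerivAt (fun t => deriv (deriv fun S => f S t) S) (K S t) t := fun S hS t ht =>
    hKeq S hS t ht ▸ (hftSS S hS t ht).hasDerivAt
  rw [← hKeq S₀ (Ioo_subset_Icc_self hS₀) t₀ ht₀]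
  exact hasDerivAt_deriv_partial_comm_of_continuous hK hfK hfS hfSS hft hS₀ hcd ht₀

end MixedPartials

def HasSecondDerivAt (f f' : ℝ → ℝ) (f'' x : ℝ) : Prop :=
  (∀ᶠ y in 𝓝 x, HasDerivAt f (f' y) y) ∧ HasDerivAt f' f'' x

namespace HasSecondDerivAt

variable {f g f' g' : ℝ → ℝ} {f'' g'' x : ℝ}

theorem of_differentiableAt (hf : ∀ᶠ y in 𝓝 x, DifferentiableAt ℝ f y)
    (hf' : DifferentiableAt ℝ (deriv f) x) : HasSecondDerivAt f (deriv f) (deriv (deriv f) x) x :=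
  ⟨hf.mono fun _ hy => hy.hasDerivAt, hf'.hasDerivAt⟩

theorem of_contDiff (hf : ContDiff ℝ 2 f) : HasSecondDerivAt f (deriv f) (deriv (deriv f) x) x :=
  have hf' := contDiff_succ_iff_deriv.1 (show ContDiff ℝ (1 + 1) f from hf)
  of_differentiableAt (Eventually.of_forall fun y => hf'.1 y)
    (hf'.2.2.differentiable one_ne_zero x)

theorem hasDerivAt (h : HasSecondDerivAt f f' f'' x) : HasDerivAt f (f' x) x := h.1.self_of_nhds

theorem deriv_eq (h : HasSecondDerivAt f f' f'' x) : deriv f x = f' x := h.hasDerivAt.deriv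

theorem deriv_deriv_eq (h : HasSecondDerivAt f f' f'' x) : deriv (deriv f) x = f'' :=
  (h.2.congr_of_eventuallyEq (h.1.mono fun _ hy => hy.deriv)).deriv

theorem id : HasSecondDerivAt (fun y => y) (fun _ => 1) 0 x :=
  ⟨Eventually.of_forall fun y => hasDerivAt_id y, hasDerivAt_const x 1⟩

theorem exp : HasSecondDerivAt Real.exp Real.exp (Real.exp x) x :=
  ⟨Eventually.of_forall Real.hasDerivAt_exp, Real.hasDerivAt_exp x⟩

theorem add (hf : HasSecondDerivAt f f' f'' x) (hg : HasSecondDerivAt g g' g'' x) :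
    HasSecondDerivAt (fun y => f y + g y) (fun y => f' y + g' y) (f'' + g'') x :=
  ⟨(hf.1.and hg.1).mono fun _ h => h.1.add h.2, hf.2.add hg.2⟩

theorem sub (hf : HasSecondDerivAt f f' f'' x) (hg : HasSecondDerivAt g g' g'' x) :
    HasSecondDerivAt (fun y => f y - g y) (fun y => f' y - g' y) (f'' - g'') x :=
  ⟨(hf.1.and hg.1).mono fun _ h => h.1.sub h.2, hf.2.sub hg.2⟩

theorem const_mul (c : ℝ) (hf : HasSecondDerivAt f f' f'' x) :
    HasSecondDerivAt (fun y => c * f y) (fun y => c * f' y) (c * f'') x :=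
  ⟨hf.1.mono fun _ h => h.const_mul c, hf.2.const_mul c⟩

theorem mul (hf : HasSecondDerivAt f f' f'' x) (hg : HasSecondDerivAt g g' g'' x) :
    HasSecondDerivAt (fun y => f y * g y) (fun y => f' y * g y + f y * g' y)
      (f'' * g x + 2 * (f' x * g' x) + f x * g'') x :=
  ⟨(hf.1.and hg.1).mono fun _ h => h.1.mul h.2,
    ((hf.2.mul hg.hasDerivAt).add (hf.hasDerivAt.mul hg.2)).congr_deriv (by ring)⟩

theorem comp (hg : HasSecondDerivAt g g' g'' (f x)) (hf : HasSecondDerivAt f f' f'' x) :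
    HasSecondDerivAt (fun y => g (f y)) (fun y => g' (f y) * f' y)
      (g'' * f' x ^ 2 + g' (f x) * f'') x :=
  ⟨((hf.hasDerivAt.continuousAt.tendsto.eventually hg.1).and hf.1).mono fun y h => h.1.comp y h.2,
    ((hg.2.comp x hf.hasDerivAt).mul hf.2).congr_deriv (by simp only [Function.comp_apply]; ring)⟩

end HasSecondDerivAt

namespace NonlinearBlackScholes

open Real

noncomputable def β (σ : ℝ → ℝ) (u : ℝ) : ℝ := 1 / 2 * σ u ^ 2 * u

/-- The nonlinear Black–Scholes equation reads `∂_t V + bsOperator σ r q (V · t) = 0`. -/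
noncomputable def bsOperator (σ : ℝ → ℝ) (r q : ℝ) (v : ℝ → ℝ) (S : ℝ) : ℝ :=
  1 / 2 * σ (S * deriv (deriv v) S) ^ 2 * S ^ 2 * deriv (deriv v) S + (r - q) * S * deriv v S -
    r * v S

/-- The Gamma equation reads `∂_τ H = gammaOperator σ r q (H · τ)`. -/
noncomputable def gammaOperator (σ : ℝ → ℝ) (r q : ℝ) (h : ℝ → ℝ) (x : ℝ) : ℝ :=
  deriv (deriv fun y => β σ (h y)) x + deriv (fun y => β σ (h y)) x + (r - q) * deriv h x -
    q * h x

theorem contDiff_β {σ : ℝ → ℝ} (hσ : ContDiff ℝ 2 σ) : ContDiff ℝ 2 (β σ) := by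
  unfold β
  fun_prop

theorem bsOperator_eq (σ : ℝ → ℝ) (r q : ℝ) (v : ℝ → ℝ) :
    bsOperator σ r q v =
      fun S => S * β σ (S * deriv (deriv v) S) + (r - q) * (S * deriv v S) - r * v S := by
  funext S
  simp only [bsOperator, β]
  ring

theorem exp_mul_deriv_deriv_bsOperator {σ v : ℝ → ℝ} (hσ : ContDiff ℝ 2 σ) (r q x : ℝ)
    (hv : ∀ᶠ S in 𝓝 (exp x), DifferentiableAt ℝ v S ∧ DifferentiableAt ℝ (deriv v) S ∧
      DifferentiableAt ℝ (deriv (deriv v)) S)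
    (hv''' : DifferentiableAt ℝ (deriv (deriv (deriv v))) (exp x)) :
    exp x * deriv (deriv (bsOperator σ r q v)) (exp x) =
      gammaOperator σ r q (fun y => exp y * deriv (deriv v) (exp y)) x := by
  have hv₀ := HasSecondDerivAt.of_differentiableAt (hv.mono fun _ h => h.1) hv.self_of_nhds.2.1
  have hv₁ := HasSecondDerivAt.of_differentiableAt (hv.mono fun _ h => h.2.1) hv.self_of_nhds.2.2
  have hv₂ := HasSecondDerivAt.of_differentiableAt (hv.mono fun _ h => h.2.2) hv'''
  have hΓ := HasSecondDerivAt.id.mul hv₂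
  have hB := (HasSecondDerivAt.of_contDiff (contDiff_β hσ)).comp hΓ
  have hL := ((HasSecondDerivAt.id.mul hB).add
    ((HasSecondDerivAt.id.mul hv₁).const_mul (r - q))).sub (hv₀.const_mul r)
  have hBx := hB.comp HasSecondDerivAt.exp
  have hΓx := hΓ.comp HasSecondDerivAt.exp
  rw [bsOperator_eq, hL.deriv_deriv_eq, gammaOperator, hBx.deriv_deriv_eq, hBx.deriv_eq,
    hΓx.deriv_eq]
  ring

end NonlinearBlackScholes

open NonlinearBlackScholes

theorem blackScholes_to_gamma_equation_general
    (σ : ℝ → ℝ) (hσ : ContDiff ℝ 2 σ)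
    (r q T : ℝ) (hT : 0 < T)
    (V : ℝ → ℝ → ℝ)
    -- existence of the partial derivatives ∂_t V, ∂_S V, ∂_S² V, ∂_S³ V, ∂_S⁴ V
    -- and of the mixed derivative ∂_t ∂_S² V on (0,∞) × [0,T]
    (hdiff : ∀ S ∈ Set.Ioi (0 : ℝ), ∀ t ∈ Set.Icc (0 : ℝ) T,
      DifferentiableAt ℝ (fun t' => V S t') t ∧
      DifferentiableAt ℝ (fun S' => V S' t) S ∧
      DifferentiableAt ℝ (deriv (fun S' => V S' t)) S ∧
      DifferentiableAt ℝ (deriv (deriv (fun S' => V S' t))) S ∧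
      DifferentiableAt ℝ (deriv (deriv (deriv (fun S' => V S' t)))) S ∧
      DifferentiableAt ℝ (fun t' => deriv (deriv (fun S' => V S' t')) S) t)
    -- continuity of those partial derivatives on (0,∞) × [0,T]
    (hcont_tSS :
      ContinuousOn (fun p : ℝ × ℝ => deriv (fun t' => deriv (deriv (fun S' => V S' t')) p.1) p.2)
      (Set.Ioi 0 ×ˢ Set.Icc 0 T))
    -- V solves the nonlinear Black–Scholes equation
    (hBS : ∀ S ∈ Set.Ioi (0 : ℝ), ∀ t ∈ Set.Ico (0 : ℝ) T,
      deriv (fun t' => V S t') t +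
        (1 / 2) * (σ (S * deriv (deriv (fun S' => V S' t)) S))^2 * S^2 *
          deriv (deriv (fun S' => V S' t)) S +
        (r - q) * S * deriv (fun S' => V S' t) S - r * V S t = 0)
    -- H is the transformed function H(x,τ) = S ∂_S² V(S,t), S = eˣ, t = T − τ
    (H : ℝ → ℝ → ℝ)
    (hH : ∀ x τ : ℝ, H x τ =
      Real.exp x * deriv (deriv (fun S' => V S' (T - τ))) (Real.exp x)) :
    ∀ x : ℝ, ∀ τ ∈ Set.Ioc (0 : ℝ) T,
      deriv (fun s => H x s) τ =
        deriv (deriv (fun y => (1 / 2) * (σ (H y τ))^2 * H y τ)) x +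
        deriv (fun y => (1 / 2) * (σ (H y τ))^2 * H y τ) x +
        (r - q) * deriv (fun y => H y τ) x - q * H x τ := by
  intro x τ hτ
  set t₀ := T - τ
  set S₀ := Real.exp x
  have hS₀ : 0 < S₀ := Real.exp_pos x
  have ht₀ : t₀ ∈ Ico 0 T := ⟨by linarith [hτ.2], by linarith [hτ.1]⟩
  have ht₀' : t₀ ∈ Icc 0 T := Ico_subset_Icc_self ht₀
  have hpos : Icc (S₀ / 2) (2 * S₀) ⊆ Ioi 0 := fun S hS => (half_pos hS₀).trans_le hS.1
  have hcomm := hasDerivAt_deriv_partial_comm (a := S₀ / 2) (b := 2 * S₀) (S₀ := S₀)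
    (fun S hS t ht => (hdiff S (hpos hS) t ht).2.1)
    (fun S hS t ht => (hdiff S (hpos hS) t ht).2.2.1)
    (fun S hS => (hdiff S (hpos hS) t₀ ht₀').1)
    (fun S hS t ht => (hdiff S (hpos hS) t ht).2.2.2.2.2)
    (hcont_tSS.mono (prod_mono hpos subset_rfl)) ⟨by linarith, by linarith⟩ hT ht₀'
  have hmixed : deriv (deriv (bsOperator σ r q fun S => V S t₀)) S₀ =
      -deriv (fun t => deriv (deriv fun S => V S t) S₀) t₀ := by
    have hBS' : (fun S => deriv (fun t => V S t) t₀) =ᶠ[𝓝 S₀]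
        fun S => -bsOperator σ r q (fun S => V S t₀) S := by
      filter_upwards [Ioi_mem_nhds hS₀] with S hS
      have := hBS S hS t₀ ht₀
      simp only [bsOperator]
      linarith
    have := (hcomm.congr_of_eventuallyEq hBS'.deriv.symm).deriv
    simp only [deriv.fun_neg', deriv.fun_neg] at this
    linarith
  have hLHS : deriv (fun s => H x s) τ =
      -(S₀ * deriv (fun t => deriv (deriv fun S => V S t) S₀) t₀) := by
    simp only [hH x, deriv_const_mul_field']
    rw [deriv_comp_const_sub (fun t => deriv (deriv fun S => V S t) S₀)]
    ring
  have hv : ∀ᶠ S in 𝓝 S₀, DifferentiableAt ℝ (fun S => V S t₀) S ∧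
      DifferentiableAt ℝ (deriv fun S => V S t₀) S ∧
      DifferentiableAt ℝ (deriv (deriv fun S => V S t₀)) S := by
    filter_upwards [Ioi_mem_nhds hS₀] with S hS
    obtain ⟨-, h₁, h₂, h₃, -⟩ := hdiff S hS t₀ ht₀'
    exact ⟨h₁, h₂, h₃⟩
  show _ = gammaOperator σ r q (fun y => H y τ) x
  rw [hLHS, funext fun y => hH y τ,
    ← exp_mul_deriv_deriv_bsOperator hσ r q x hv (hdiff S₀ hS₀ t₀ ht₀').2.2.2.2.1, hmixed]
  ring

/-- Transformation of the nonlinear Black–Scholes equation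
`∂_t V + (1/2) σ(S ∂_S² V)² S² ∂_S² V + (r − q) S ∂_S V − r V = 0`
into the Gamma equation
`∂_τ H = ∂_x² β(H) + ∂_x β(H) + (r − q) ∂_x H − q H`
via `H(x,τ) = S ∂_S² V(S,t)`, `S = eˣ`, `t = T − τ`, `β(u) = (1/2) σ(u)² u`. -/
theorem blackScholes_to_gamma_equation
    (σ : ℝ → ℝ) (hσ : ContDiff ℝ 2 σ)
    (r q T : ℝ) (hT : 0 < T)
    (V : ℝ → ℝ → ℝ)
    -- existence of the partial derivatives ∂_t V, ∂_S V, ∂_S² V, ∂_S³ V, ∂_S⁴ V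
    -- and of the mixed derivative ∂_t ∂_S² V on (0,∞) × [0,T]
    (hdiff : ∀ S ∈ Set.Ioi (0 : ℝ), ∀ t ∈ Set.Icc (0 : ℝ) T,
      DifferentiableAt ℝ (fun t' => V S t') t ∧
      DifferentiableAt ℝ (fun S' => V S' t) S ∧
      DifferentiableAt ℝ (deriv (fun S' => V S' t)) S ∧
      DifferentiableAt ℝ (deriv (deriv (fun S' => V S' t))) S ∧
      DifferentiableAt ℝ (deriv (deriv (deriv (fun S' => V S' t)))) S ∧
      DifferentiableAt ℝ (fun t' => deriv (deriv (fun S' => V S' t')) S) t)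
    -- continuity of those partial derivatives on (0,∞) × [0,T]
    (hcont_t : ContinuousOn (fun p : ℝ × ℝ => deriv (fun t' => V p.1 t') p.2)
      (Set.Ioi 0 ×ˢ Set.Icc 0 T))
    (hcont_S : ContinuousOn (fun p : ℝ × ℝ => deriv (fun S' => V S' p.2) p.1)
      (Set.Ioi 0 ×ˢ Set.Icc 0 T))
    (hcont_SS : ContinuousOn (fun p : ℝ × ℝ => deriv (deriv (fun S' => V S' p.2)) p.1)
      (Set.Ioi 0 ×ˢ Set.Icc 0 T))
    (hcont_SSS :
      ContinuousOn (fun p : ℝ × ℝ => deriv (deriv (deriv (fun S' => V S' p.2))) p.1)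
      (Set.Ioi 0 ×ˢ Set.Icc 0 T))
    (hcont_SSSS :
      ContinuousOn
        (fun p : ℝ × ℝ => deriv (deriv (deriv (deriv (fun S' => V S' p.2)))) p.1)
      (Set.Ioi 0 ×ˢ Set.Icc 0 T))
    (hcont_tSS :
      ContinuousOn (fun p : ℝ × ℝ => deriv (fun t' => deriv (deriv (fun S' => V S' t')) p.1) p.2)
      (Set.Ioi 0 ×ˢ Set.Icc 0 T))
    -- V solves the nonlinear Black–Scholes equation
    (hBS : ∀ S ∈ Set.Ioi (0 : ℝ), ∀ t ∈ Set.Ico (0 : ℝ) T,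
      deriv (fun t' => V S t') t +
        (1 / 2) * (σ (S * deriv (deriv (fun S' => V S' t)) S))^2 * S^2 *
          deriv (deriv (fun S' => V S' t)) S +
        (r - q) * S * deriv (fun S' => V S' t) S - r * V S t = 0)
    -- H is the transformed function H(x,τ) = S ∂_S² V(S,t), S = eˣ, t = T − τ
    (H : ℝ → ℝ → ℝ)
    (hH : ∀ x τ : ℝ, H x τ =
      Real.exp x * deriv (deriv (fun S' => V S' (T - τ))) (Real.exp x)) :
    ∀ x : ℝ, ∀ τ ∈ Set.Ioc (0 : ℝ) T,
      deriv (fun s => H x s) τ =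
        deriv (deriv (fun y => (1 / 2) * (σ (H y τ))^2 * H y τ)) x +
        deriv (fun y => (1 / 2) * (σ (H y τ))^2 * H y τ) x +
        (r - q) * deriv (fun y => H y τ) x - q * H x τ :=
  blackScholes_to_gamma_equation_general σ hσ r q T hT V hdiff hcont_tSS hBS H hH
end

section
/- Let n ≥ 1, let Σ be a symmetric positive definite n × n real matrix with smallest eigenvalue λ_min > 0 and largest eigenvalue λ_max, let μ ∈ ℝⁿ, and on the standard simplex Sⁿ = {θ ∈ ℝⁿ : θᵢ ≥ 0, Σᵢθᵢ = 1} define β(φ) = min_{θ ∈ Sⁿ} { −μᵀθ + (φ/2) θᵀΣθ }. Then for all φ₁ ≤ φ₂, (λ_min/(2n)) (φ₂ − φ₁) ≤ β(φ₂) − β(φ₁) ≤ (λ_max/2) (φ₂ − φ₁). In particular β is Lipschitz continuous and strictly increasing, and wherever β is differentiable its derivative satisfies λ_min/(2n) ≤ β′(φ) ≤ λ_max/2. -/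
/-!
For each portfolio `θ`, the objective `-μᵀθ + (φ/2) θᵀΣθ` is affine in `φ` with slope
`θᵀΣθ / 2`. On the simplex, `1/n ≤ ‖θ‖² ≤ 1` and the Rayleigh bounds put this slope in
`[λ_min/(2n), λ_max/2]`, and an infimum of affine functions whose slopes lie in an interval
has its increments controlled by the same interval. Lipschitz continuity, strict monotonicity
and the derivative bounds all follow from the increment bounds.
-/

open Matrix

open scoped MatrixOrder

section Rayleigh

variable {ι : Type*} [Fintype ι] [DecidableEq ι] {A : Matrix ι ι ℝ}

lemma Matrix.IsHermitian.mul_dotProduct_self_le_dotProduct_mulVec (hA : A.IsHermitian) {c : ℝ}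
    (hc : ∀ i, c ≤ hA.eigenvalues i) (x : ι → ℝ) : c * (x ⬝ᵥ x) ≤ x ⬝ᵥ A *ᵥ x := by
  have hle : algebraMap ℝ _ c ≤ A := by
    rw [algebraMap_le_iff_le_spectrum hA.isSelfAdjoint, hA.spectrum_real_eq_range_eigenvalues]
    rintro _ ⟨i, rfl⟩
    exact hc i
  simpa [sub_mulVec, dotProduct_sub, Algebra.algebraMap_eq_smul_one, smul_mulVec] using
    (Matrix.le_iff.mp hle).dotProduct_mulVec_nonneg x

lemma Matrix.IsHermitian.dotProduct_mulVec_le_mul_dotProduct_self (hA : A.IsHermitian) {c : ℝ}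
    (hc : ∀ i, hA.eigenvalues i ≤ c) (x : ι → ℝ) : x ⬝ᵥ A *ᵥ x ≤ c * (x ⬝ᵥ x) := by
  have hle : A ≤ algebraMap ℝ _ c := by
    rw [le_algebraMap_iff_spectrum_le hA.isSelfAdjoint, hA.spectrum_real_eq_range_eigenvalues]
    rintro _ ⟨i, rfl⟩
    exact hc i
  simpa [sub_mulVec, dotProduct_sub, Algebra.algebraMap_eq_smul_one, smul_mulVec] using
    (Matrix.le_iff.mp hle).dotProduct_mulVec_nonneg x

end Rayleigh

section Simplex

variable {ι : Type*} [Fintype ι] {θ : ι → ℝ}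

lemma dotProduct_self_le_one_of_mem_stdSimplex (hθ : θ ∈ stdSimplex ℝ ι) : θ ⬝ᵥ θ ≤ 1 := by
  simpa [dotProduct, sq, hθ.2] using
    Finset.sum_sq_le_sq_sum_of_nonneg (s := Finset.univ) fun i _ => hθ.1 i

lemma one_le_card_mul_dotProduct_self_of_mem_stdSimplex (hθ : θ ∈ stdSimplex ℝ ι) :
    1 ≤ Fintype.card ι * (θ ⬝ᵥ θ) := by
  simpa [dotProduct, sq, hθ.2] using sq_sum_le_card_mul_sum_sq (s := Finset.univ) (f := θ)

variable [DecidableEq ι] {A : Matrix ι ι ℝ} (hA : A.IsHermitian) {c : ℝ}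
include hA

lemma Matrix.IsHermitian.div_card_le_dotProduct_mulVec_of_mem_stdSimplex
    (hc : ∀ i, c ≤ hA.eigenvalues i) (hc₀ : 0 ≤ c) (hθ : θ ∈ stdSimplex ℝ ι) :
    c / Fintype.card ι ≤ θ ⬝ᵥ A *ᵥ θ := by
  have hcard := one_le_card_mul_dotProduct_self_of_mem_stdSimplex hθ
  have hq := hA.mul_dotProduct_self_le_dotProduct_mulVec hc θ
  have hq₀ : 0 ≤ θ ⬝ᵥ A *ᵥ θ := hq.trans' (mul_nonneg hc₀ (dotProduct_self_star_nonneg θ))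
  exact div_le_of_le_mul₀ (by positivity) hq₀ (by nlinarith)

lemma Matrix.IsHermitian.dotProduct_mulVec_le_of_mem_stdSimplex
    (hc : ∀ i, hA.eigenvalues i ≤ c) (hc₀ : 0 ≤ c) (hθ : θ ∈ stdSimplex ℝ ι) :
    θ ⬝ᵥ A *ᵥ θ ≤ c :=
  (hA.dotProduct_mulVec_le_mul_dotProduct_self hc θ).trans <|
    mul_le_of_le_one_right hc₀ (dotProduct_self_le_one_of_mem_stdSimplex hθ)

end Simplex

lemma sInf_image_le_sInf_image_add {α : Type*} {S : Set α} (hS : S.Nonempty) {f g : α → ℝ}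
    (hg : BddBelow (g '' S)) {c : ℝ} (h : ∀ x ∈ S, g x ≤ f x + c) :
    sInf (g '' S) ≤ sInf (f '' S) + c := by
  rw [← sub_le_iff_le_add]
  refine le_csInf (hS.image f) ?_
  rintro _ ⟨x, hx, rfl⟩
  linarith [csInf_le hg (Set.mem_image_of_mem g hx), h x hx]

lemma sInf_affine_increment_bounds {α : Type*} [TopologicalSpace α] {S : Set α}
    (hS : IsCompact S) (hne : S.Nonempty) {a q : α → ℝ} (ha : ContinuousOn a S)
    (hq : ContinuousOn q S) {m M : ℝ} (hm : ∀ x ∈ S, m ≤ q x) (hM : ∀ x ∈ S, q x ≤ M)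
    {t₁ t₂ : ℝ} (ht : t₁ ≤ t₂) :
    let β := fun t => sInf ((fun x => a x + t * q x) '' S)
    m * (t₂ - t₁) ≤ β t₂ - β t₁ ∧ β t₂ - β t₁ ≤ M * (t₂ - t₁) := by
  have hbdd : ∀ t, BddBelow ((fun x => a x + t * q x) '' S) := fun t =>
    hS.bddBelow_image (ha.add (continuousOn_const.mul hq))
  constructor
  · have := sInf_image_le_sInf_image_add hne (hbdd t₁) (f := fun x => a x + t₂ * q x)
      (c := -(m * (t₂ - t₁))) fun x hx => by nlinarith [hm x hx]
    linarith
  · have := sInf_image_le_sInf_image_add hne (hbdd t₂) (f := fun x => a x + t₁ * q x)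
      (c := M * (t₂ - t₁)) fun x hx => by nlinarith [hM x hx]
    linarith

section IncrementBounds

variable {f : ℝ → ℝ} {c C : ℝ}

lemma strictMono_of_mul_sub_le (hc : 0 < c) (hf : ∀ x y, x ≤ y → c * (y - x) ≤ f y - f x) :
    StrictMono f := fun x y h => by nlinarith [hf x y h.le]

lemma lipschitzWith_of_sub_le_mul (hmono : Monotone f)
    (hf : ∀ x y, x ≤ y → f y - f x ≤ C * (y - x)) : LipschitzWith C.toNNReal f := by
  refine LipschitzWith.of_dist_le_mul fun x y => ?_
  wlog hxy : x ≤ y generalizing x y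
  · rw [dist_comm, dist_comm x]
    exact this y x (le_of_not_ge hxy)
  rw [dist_comm, Real.dist_eq, abs_of_nonneg (sub_nonneg.mpr (hmono hxy)), dist_comm,
    Real.dist_eq, abs_of_nonneg (sub_nonneg.mpr hxy)]
  exact (hf x y hxy).trans
    (mul_le_mul_of_nonneg_right (Real.le_coe_toNNReal C) (sub_nonneg.mpr hxy))

lemma deriv_mem_Icc_of_increment_bounds
    (hf : ∀ x y, x ≤ y → c * (y - x) ≤ f y - f x ∧ f y - f x ≤ C * (y - x))
    {x : ℝ} (hd : DifferentiableAt ℝ f x) : c ≤ deriv f x ∧ deriv f x ≤ C := by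
  have hlow : Monotone fun y => f y - c * y := fun y z h => by linarith [(hf y z h).1]
  have hup : Monotone fun y => C * y - f y := fun y z h => by linarith [(hf y z h).2]
  have h₁ := hlow.deriv_nonneg (x := x)
  have h₂ := hup.deriv_nonneg (x := x)
  rw [deriv_fun_sub hd (by fun_prop)] at h₁
  rw [deriv_fun_sub (by fun_prop) hd] at h₂
  simp only [deriv_const_mul_id', sub_nonneg] at h₁ h₂
  exact ⟨h₁, h₂⟩

end IncrementBounds

theorem betaHJB_increment_bounds_general
    (n : ℕ)
    (Sig : Matrix (Fin n) (Fin n) ℝ) (hpd : Sig.PosDef)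
    (lmin lmax : ℝ)
    (hlmin : IsLeast (Set.range hpd.1.eigenvalues) lmin)
    (hlmax : IsGreatest (Set.range hpd.1.eigenvalues) lmax)
    (μ : Fin n → ℝ)
    (β : ℝ → ℝ)
    (hβ : ∀ φ : ℝ, β φ =
      sInf ((fun θ : Fin n → ℝ => -(μ ⬝ᵥ θ) + (φ / 2) * (θ ⬝ᵥ Sig.mulVec θ)) ''
        stdSimplex ℝ (Fin n))) :
    (∀ φ₁ φ₂ : ℝ, φ₁ ≤ φ₂ →
      lmin / (2 * n) * (φ₂ - φ₁) ≤ β φ₂ - β φ₁ ∧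
      β φ₂ - β φ₁ ≤ lmax / 2 * (φ₂ - φ₁)) ∧
    LipschitzWith (Real.toNNReal (lmax / 2)) β ∧
    StrictMono β ∧
    (∀ φ : ℝ, DifferentiableAt ℝ β φ →
      lmin / (2 * n) ≤ deriv β φ ∧ deriv β φ ≤ lmax / 2) := by
  obtain ⟨i₀, hi₀⟩ := hlmin.1
  have hlmin₀ : 0 < lmin := hi₀ ▸ hpd.eigenvalues_pos i₀
  have hlmax₀ : 0 < lmax := hlmin₀.trans_le (hlmax.2 ⟨i₀, hi₀⟩)
  have hn : (0 : ℝ) < n := by exact_mod_cast i₀.pos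
  have hquad_low : ∀ θ ∈ stdSimplex ℝ (Fin n), lmin / n ≤ θ ⬝ᵥ Sig *ᵥ θ := fun θ hθ => by
    simpa using hpd.1.div_card_le_dotProduct_mulVec_of_mem_stdSimplex
      (fun i => hlmin.2 ⟨i, rfl⟩) hlmin₀.le hθ
  have hquad_up : ∀ θ ∈ stdSimplex ℝ (Fin n), θ ⬝ᵥ Sig *ᵥ θ ≤ lmax := fun θ hθ =>
    hpd.1.dotProduct_mulVec_le_of_mem_stdSimplex (fun i => hlmax.2 ⟨i, rfl⟩) hlmax₀.le hθ
  have hinc : ∀ φ₁ φ₂ : ℝ, φ₁ ≤ φ₂ →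
      lmin / (2 * n) * (φ₂ - φ₁) ≤ β φ₂ - β φ₁ ∧ β φ₂ - β φ₁ ≤ lmax / 2 * (φ₂ - φ₁) := by
    intro φ₁ φ₂ h
    have := sInf_affine_increment_bounds (isCompact_stdSimplex ℝ (Fin n))
      ⟨_, single_mem_stdSimplex ℝ i₀⟩ (a := fun θ => -(μ ⬝ᵥ θ)) (by fun_prop)
      (q := fun θ => θ ⬝ᵥ Sig *ᵥ θ) (by fun_prop) hquad_low hquad_up
      (div_le_div_of_nonneg_right h zero_le_two)
    rw [hβ, hβ]
    convert this using 2 <;> ring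
  have hmono : StrictMono β :=
    strictMono_of_mul_sub_le (by positivity) fun x y h => (hinc x y h).1
  exact ⟨hinc, lipschitzWith_of_sub_le_mul hmono.monotone fun x y h => (hinc x y h).2, hmono,
    fun φ => deriv_mem_Icc_of_increment_bounds hinc⟩

/-- Two-sided increment bounds for the diffusion function
`β(φ) = min_{θ ∈ Sⁿ} { −μᵀθ + (φ/2) θᵀΣθ }` when `σ²(θ) = θᵀΣθ` with a symmetric
positive definite covariance matrix `Σ`: for `φ₁ ≤ φ₂`,
`(λ_min/(2n))(φ₂ − φ₁) ≤ β(φ₂) − β(φ₁) ≤ (λ_max/2)(φ₂ − φ₁)`; in particular `β` is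
Lipschitz continuous, strictly increasing, and `λ_min/(2n) ≤ β′ ≤ λ_max/2` wherever
`β` is differentiable. -/
theorem betaHJB_increment_bounds
    (n : ℕ) (hn : 1 ≤ n)
    (Sig : Matrix (Fin n) (Fin n) ℝ) (hsymm : Sig.IsSymm) (hpd : Sig.PosDef)
    (lmin lmax : ℝ)
    (hlmin : IsLeast (Set.range hpd.1.eigenvalues) lmin)
    (hlmax : IsGreatest (Set.range hpd.1.eigenvalues) lmax)
    (hlminpos : 0 < lmin)
    (μ : Fin n → ℝ)
    (β : ℝ → ℝ)
    (hβ : ∀ φ : ℝ, β φ =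
      sInf ((fun θ : Fin n → ℝ => -(μ ⬝ᵥ θ) + (φ / 2) * (θ ⬝ᵥ Sig.mulVec θ)) ''
        stdSimplex ℝ (Fin n))) :
    (∀ φ₁ φ₂ : ℝ, φ₁ ≤ φ₂ →
      lmin / (2 * n) * (φ₂ - φ₁) ≤ β φ₂ - β φ₁ ∧
      β φ₂ - β φ₁ ≤ lmax / 2 * (φ₂ - φ₁)) ∧
    LipschitzWith (Real.toNNReal (lmax / 2)) β ∧
    StrictMono β ∧
    (∀ φ : ℝ, DifferentiableAt ℝ β φ →
      lmin / (2 * n) ≤ deriv β φ ∧ deriv β φ ≤ lmax / 2) :=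
  betaHJB_increment_bounds_general n Sig hpd lmin lmax hlmin hlmax μ β hβ
end

section
/- Let Ψ : [0,∞) → ℝ be continuous with Ψ(0) = 0, Ψ(x) > 0 for x > 0, differentiable on (0,∞), and suppose that for all x > 0 one has 2√(x Ψ(x)) − x > 0 and Ψ′(x) = (Ψ(x) + 1)/(2√(x Ψ(x)) − x). Then Ψ(x) = O(x^{1/3}) as x → 0⁺; that is, there exist constants C > 0 and δ > 0 such that Ψ(x) ≤ C x^{1/3} for all x ∈ (0, δ]. -/
set_option maxHeartbeats 1000000


/-- Asymptotics of the Barles–Soner function `Ψ` near the origin: the solution of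
`Ψ′(x) = (Ψ(x)+1)/(2√(xΨ(x)) − x)`, `Ψ(0) = 0`, satisfies `Ψ(x) = O(x^{1/3})` as
`x → 0⁺`. -/
theorem barlesSoner_psi_near_zero
    (Ψ : ℝ → ℝ)
    (hcont : ContinuousOn Ψ (Set.Ici 0))
    (hΨ0 : Ψ 0 = 0)
    (hΨpos : ∀ x : ℝ, 0 < x → 0 < Ψ x)
    (hdenom : ∀ x : ℝ, 0 < x → 0 < 2 * Real.sqrt (x * Ψ x) - x)
    (hODE : ∀ x : ℝ, 0 < x →
      HasDerivAt Ψ ((Ψ x + 1) / (2 * Real.sqrt (x * Ψ x) - x)) x) :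
    ∃ C : ℝ, 0 < C ∧ ∃ δ : ℝ, 0 < δ ∧
      ∀ x ∈ Set.Ioc (0 : ℝ) δ, Ψ x ≤ C * x ^ ((1 : ℝ) / 3) := by

  set δ : ℝ := 1/729 with hδdef
  have hδ13 : (δ : ℝ) ^ ((1:ℝ)/3) = 1/9 := by
    have : (δ:ℝ) = (1/9 : ℝ) ^ (3:ℝ) := by
      rw [show (3:ℝ) = ((3:ℕ):ℝ) by norm_num, Real.rpow_natCast]; norm_num
    rw [this, ← Real.rpow_mul (by norm_num)]; norm_num
  -- key: for every ε ∈ (0,1], Ψ x ≤ 9 x^{1/3} + ε on (0, δ]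
  have key : ∀ ε : ℝ, 0 < ε → ε ≤ 1 → ∀ x ∈ Set.Ioc (0:ℝ) δ,
      Ψ x ≤ 9 * x ^ ((1:ℝ)/3) + ε := by
    intro ε hε hε1
    by_contra hbad
    push_neg at hbad
    obtain ⟨z, hz, hzbad⟩ := hbad
    set S : Set ℝ := {x | x ∈ Set.Ioc (0:ℝ) δ ∧ 9 * x ^ ((1:ℝ)/3) + ε < Ψ x} with hSdef
    have hSne : S.Nonempty := ⟨z, hz, hzbad⟩
    -- continuity at 0 gives η with Ψ < ε on [0, η)
    have h0 : ContinuousWithinAt Ψ (Set.Ici 0) 0 := hcont 0 Set.self_mem_Ici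
    rw [Metric.continuousWithinAt_iff] at h0
    obtain ⟨η, hη, hηball⟩ := h0 ε hε
    have hηlb : ∀ y ∈ S, η ≤ y := by
      intro y hy
      by_contra hlt
      push_neg at hlt
      have hy0 : (0:ℝ) < y := hy.1.1
      have hd : dist y 0 < η := by
        rw [Real.dist_eq, sub_zero, abs_of_pos hy0]; exact hlt
      have := hηball (le_of_lt hy0) hd
      rw [Real.dist_eq, hΨ0, sub_zero] at this
      have hΨy : Ψ y < ε := (le_abs_self _).trans_lt this
      have hpow : (0:ℝ) ≤ 9 * y ^ ((1:ℝ)/3) := by positivity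
      linarith [hy.2]
    have hbdd : BddBelow S := ⟨η, hηlb⟩
    set x₀ : ℝ := sInf S with hx₀def
    have hx₀η : η ≤ x₀ := le_csInf hSne hηlb
    have hx₀pos : 0 < x₀ := lt_of_lt_of_le hη hx₀η
    have hx₀δ : x₀ ≤ δ := (csInf_le hbdd ⟨hz, hzbad⟩).trans hz.2
    -- (b) below x₀, Ψ ≤ barrier
    have hbelow : ∀ y ∈ Set.Ioo (0:ℝ) x₀, Ψ y ≤ 9 * y ^ ((1:ℝ)/3) + ε := by
      intro y hy
      by_contra hlt
      push_neg at hlt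
      have : y ∈ S := ⟨⟨hy.1, hy.2.le.trans hx₀δ⟩, hlt⟩
      exact absurd (csInf_le hbdd this) (not_le.mpr hy.2)
    -- (a) at x₀, Ψ ≥ barrier (x₀ ∈ closure S)
    have hx₀cl : x₀ ∈ closure S := by
      exact (isGLB_csInf hSne hbdd).mem_closure hSne  -- maybe wrong name
    have habove : 9 * x₀ ^ ((1:ℝ)/3) + ε ≤ Ψ x₀ := by
      have hSsub : S ⊆ Set.Ici (0:ℝ) := fun y hy => hy.1.1.le
      have hcx : ContinuousWithinAt (fun y => Ψ y - (9 * y ^ ((1:ℝ)/3) + ε)) S x₀ := by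
        apply ContinuousWithinAt.sub
        · exact (hcont x₀ hx₀pos.le).mono hSsub
        · have h1 : ContinuousAt (fun y:ℝ => y ^ ((1:ℝ)/3)) x₀ :=
              Real.continuousAt_rpow_const x₀ _ (Or.inl hx₀pos.ne')
          have h2 : ContinuousAt (fun y:ℝ => 9 * y ^ ((1:ℝ)/3) + ε) x₀ :=
            (h1.const_mul 9).add continuousAt_const
          exact h2.continuousWithinAt
      have hne : (nhdsWithin x₀ S).NeBot := mem_closure_iff_nhdsWithin_neBot.mp hx₀cl
      have : 0 ≤ Ψ x₀ - (9 * x₀ ^ ((1:ℝ)/3) + ε) := by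
        haveI := hne
        refine ge_of_tendsto hcx ?_
        filter_upwards [self_mem_nhdsWithin] with y hy
        exact le_of_lt (by linarith [hy.2])
      linarith
    -- (c) at x₀, Ψ ≤ barrier (left limit)
    have hbelow' : Ψ x₀ ≤ 9 * x₀ ^ ((1:ℝ)/3) + ε := by
      have hsub : Set.Ioo (0:ℝ) x₀ ⊆ Set.Ici (0:ℝ) := fun y hy => hy.1.le
      have hcx : ContinuousWithinAt (fun y => (9 * y ^ ((1:ℝ)/3) + ε) - Ψ y) (Set.Ioo 0 x₀) x₀ := by
        apply ContinuousWithinAt.sub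
        · have h1 : ContinuousAt (fun y:ℝ => y ^ ((1:ℝ)/3)) x₀ :=
              Real.continuousAt_rpow_const x₀ _ (Or.inl hx₀pos.ne')
          have h2 : ContinuousAt (fun y:ℝ => 9 * y ^ ((1:ℝ)/3) + ε) x₀ :=
            (h1.const_mul 9).add continuousAt_const
          exact h2.continuousWithinAt
        · exact (hcont x₀ hx₀pos.le).mono hsub
      have hne : (nhdsWithin x₀ (Set.Ioo (0:ℝ) x₀)).NeBot := by
        apply mem_closure_iff_nhdsWithin_neBot.mp
        rw [closure_Ioo hx₀pos.ne]
        exact Set.right_mem_Icc.mpr hx₀pos.le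
      have : 0 ≤ (9 * x₀ ^ ((1:ℝ)/3) + ε) - Ψ x₀ := by
        haveI := hne
        refine ge_of_tendsto hcx ?_
        filter_upwards [self_mem_nhdsWithin] with y hy
        linarith [hbelow y hy]
      linarith
    -- quantitative bounds at x₀
    have hx₀13 : x₀ ^ ((1:ℝ)/3) ≤ 1/9 := by
      rw [← hδ13]; exact Real.rpow_le_rpow hx₀pos.le hx₀δ (by norm_num)
    have hΨx₀ : Ψ x₀ ≤ 2 := by
      calc Ψ x₀ ≤ 9 * x₀ ^ ((1:ℝ)/3) + ε := hbelow'
      _ ≤ 9 * (1/9) + 1 := by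
          have : (0:ℝ) ≤ 9 := by norm_num
          nlinarith
      _ = 2 := by norm_num
    -- denominator lower bound
    have hx23pos : 0 < x₀ ^ ((2:ℝ)/3) := Real.rpow_pos_of_pos hx₀pos _
    have hsqrt : 3 * x₀ ^ ((2:ℝ)/3) ≤ Real.sqrt (x₀ * Ψ x₀) := by
      rw [show (3 * x₀ ^ ((2:ℝ)/3) ≤ Real.sqrt (x₀ * Ψ x₀)) ↔
        ((3 * x₀ ^ ((2:ℝ)/3))^2 ≤ x₀ * Ψ x₀) from
        Real.le_sqrt (by positivity) (mul_nonneg hx₀pos.le (hΨpos x₀ hx₀pos).le)]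
      have h1 : (3 * x₀ ^ ((2:ℝ)/3))^2 = 9 * x₀ ^ ((4:ℝ)/3) := by
        rw [mul_pow, ← Real.rpow_natCast (x₀ ^ ((2:ℝ)/3)) 2, ← Real.rpow_mul hx₀pos.le]
        norm_num
      rw [h1]
      have h2 : x₀ * (9 * x₀ ^ ((1:ℝ)/3)) = 9 * x₀ ^ ((4:ℝ)/3) := by
        rw [show x₀ * (9 * x₀ ^ ((1:ℝ)/3)) = 9 * (x₀ ^ (1:ℝ) * x₀ ^ ((1:ℝ)/3)) by
          rw [Real.rpow_one]; ring, ← Real.rpow_add hx₀pos]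
        norm_num
      have h3 : 9 * x₀ ^ ((1:ℝ)/3) ≤ Ψ x₀ := by linarith
      nlinarith [hx₀pos.le]
    have hx₀le1 : x₀ ≤ 1 := hx₀δ.trans (by norm_num)
    have hxle : x₀ ≤ 3 * x₀ ^ ((2:ℝ)/3) := by
      have h13 : x₀ ^ ((1:ℝ)/3) ≤ 1 := hx₀13.trans (by norm_num)
      have : x₀ = x₀ ^ ((1:ℝ)/3) * x₀ ^ ((2:ℝ)/3) := by
        rw [← Real.rpow_add hx₀pos]; norm_num
      nlinarith [Real.rpow_nonneg hx₀pos.le ((1:ℝ)/3), hx23pos.le]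
    have hdenomlb : 3 * x₀ ^ ((2:ℝ)/3) ≤ 2 * Real.sqrt (x₀ * Ψ x₀) - x₀ := by linarith
    -- derivative bound at x₀
    have hΨ'le : (Ψ x₀ + 1) / (2 * Real.sqrt (x₀ * Ψ x₀) - x₀) ≤ x₀ ^ (-(2:ℝ)/3) := by
      have h1 : (Ψ x₀ + 1) / (2 * Real.sqrt (x₀ * Ψ x₀) - x₀) ≤ 3 / (3 * x₀ ^ ((2:ℝ)/3)) := by
        apply div_le_div₀ (by norm_num) (by linarith) (by positivity) hdenomlb
      have h2 : 3 / (3 * x₀ ^ ((2:ℝ)/3)) = x₀ ^ (-(2:ℝ)/3) := by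
        rw [show (-(2:ℝ)/3) = -((2:ℝ)/3) by ring, Real.rpow_neg hx₀pos.le]
        field_simp
      linarith [h1, h2.le, h2.ge]
    -- barrier has derivative 3 x₀^{-2/3}
    have hbar : HasDerivAt (fun y : ℝ => 9 * y ^ ((1:ℝ)/3) + ε)
        (9 * ((1:ℝ)/3 * x₀ ^ ((1:ℝ)/3 - 1))) x₀ :=
      ((Real.hasDerivAt_rpow_const (Or.inl hx₀pos.ne')).const_mul 9).add_const ε
    have hexp : (1:ℝ)/3 - 1 = -(2:ℝ)/3 := by norm_num
    have hfun := hbar.sub (hODE x₀ hx₀pos)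
    set d : ℝ := 9 * ((1:ℝ)/3 * x₀ ^ ((1:ℝ)/3 - 1)) -
        (Ψ x₀ + 1) / (2 * Real.sqrt (x₀ * Ψ x₀) - x₀) with hddef
    have hdpos : 0 < d := by
      have hxneg : 0 < x₀ ^ (-(2:ℝ)/3) := Real.rpow_pos_of_pos hx₀pos _
      rw [hddef, hexp]
      nlinarith [hΨ'le]
    -- slope contradiction
    have hslope := hasDerivAt_iff_tendsto_slope.mp hfun
    have hslope' : Filter.Tendsto (slope (fun y => (9 * y ^ ((1:ℝ)/3) + ε) - Ψ y) x₀)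
        (nhdsWithin x₀ (Set.Iio x₀)) (nhds d) :=
      hslope.mono_left (nhdsWithin_mono _ (fun y hy => ne_of_lt hy))
    have hev : ∀ᶠ y in nhdsWithin x₀ (Set.Iio x₀),
        0 < slope (fun y => (9 * y ^ ((1:ℝ)/3) + ε) - Ψ y) x₀ y :=
      hslope'.eventually (eventually_gt_nhds hdpos)
    have hev2 : ∀ᶠ y in nhdsWithin x₀ (Set.Iio x₀), y ∈ Set.Ioo (0:ℝ) x₀ :=
      Ioo_mem_nhdsLT_of_mem ⟨hx₀pos, le_refl x₀⟩
    obtain ⟨y, hy1, hy2⟩ := (hev.and hev2).exists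
    -- derive contradiction
    set g : ℝ → ℝ := fun y => (9 * y ^ ((1:ℝ)/3) + ε) - Ψ y with hgdef
    have hgy : 0 ≤ g y := by have := hbelow y hy2; simp only [hgdef]; linarith
    have hgx₀ : g x₀ ≤ 0 := by simp only [hgdef]; linarith
    have hyx : y - x₀ < 0 := sub_neg.mpr hy2.2
    have hsl : 0 < (g y - g x₀) / (y - x₀) := by
      have := hy1
      rw [slope_def_field] at this
      convert this using 2 <;> ring
    have : g y - g x₀ < 0 := by
      by_contra hge
      push_neg at hge
      have := div_nonpos_of_nonneg_of_nonpos hge hyx.le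
      linarith
    linarith
  -- conclude
  refine ⟨9, by norm_num, δ, by norm_num, ?_⟩
  intro x hx
  have : ∀ ε : ℝ, 0 < ε → Ψ x ≤ 9 * x ^ ((1:ℝ)/3) + ε := by
    intro ε hε
    rcases le_or_gt ε 1 with h | h
    · exact key ε hε h x hx
    · have := key 1 one_pos le_rfl x hx
      linarith
  exact le_of_forall_pos_le_add this
end

section
/- Let Ψ : [0,∞) → ℝ be continuous with Ψ(0) = 0, Ψ(x) > 0 for x > 0, differentiable on (0,∞), and suppose that for all x > 0 one has 2√(x Ψ(x)) − x > 0 and Ψ′(x) = (Ψ(x) + 1)/(2√(x Ψ(x)) − x). Then Ψ(x) = O(x) as x → ∞; that is, there exist constants C > 0 and x₀ > 0 such that Ψ(x) ≤ C x for all x ≥ x₀. -/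
/-- Asymptotics of the Barles–Soner function `Ψ` at infinity: the solution of
`Ψ′(x) = (Ψ(x)+1)/(2√(xΨ(x)) − x)`, `Ψ(0) = 0`, satisfies `Ψ(x) = O(x)` as
`x → ∞`. -/
theorem barlesSoner_psi_at_infinity
    (Ψ : ℝ → ℝ)
    (hcont : ContinuousOn Ψ (Set.Ici 0))
    (hΨ0 : Ψ 0 = 0)
    (hΨpos : ∀ x : ℝ, 0 < x → 0 < Ψ x)
    (hdenom : ∀ x : ℝ, 0 < x → 0 < 2 * Real.sqrt (x * Ψ x) - x)
    (hODE : ∀ x : ℝ, 0 < x →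
      HasDerivAt Ψ ((Ψ x + 1) / (2 * Real.sqrt (x * Ψ x) - x)) x) :
    ∃ C : ℝ, 0 < C ∧ ∃ x₀ : ℝ, 0 < x₀ ∧ ∀ x : ℝ, x₀ ≤ x → Ψ x ≤ C * x := by
  set C : ℝ := max 4 (Ψ 1 + 1) with hC
  have hC4 : (4 : ℝ) ≤ C := le_max_left _ _
  have hCΨ : Ψ 1 + 1 ≤ C := le_max_right _ _
  have hCpos : 0 < C := by linarith
  refine ⟨C, hCpos, 1, one_pos, fun b hb => ?_⟩
  have key : ∀ x ∈ Set.Icc (1 : ℝ) b, Ψ x ≤ C * x := by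
    apply image_le_of_deriv_right_lt_deriv_boundary
      (f' := fun x => (Ψ x + 1) / (2 * Real.sqrt (x * Ψ x) - x))
      (B := fun x => C * x) (B' := fun _ => C)
    · exact hcont.mono fun y hy => le_trans zero_le_one hy.1
    · intro y hy
      exact (hODE y (lt_of_lt_of_le one_pos hy.1)).hasDerivWithinAt
    · show Ψ 1 ≤ C * 1
      rw [mul_one]; linarith
    · intro y
      simpa using (hasDerivAt_id y).const_mul C
    · intro y hy heq
      have hy1 : (1 : ℝ) ≤ y := hy.1
      have hypos : 0 < y := lt_of_lt_of_le one_pos hy1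
      have hΨy : Ψ y = C * y := heq
      set s := Real.sqrt C with hs
      have hs2 : (2 : ℝ) ≤ s := by
        rw [hs, show (2 : ℝ) = Real.sqrt 4 by
          rw [show (4 : ℝ) = 2 ^ 2 by norm_num, Real.sqrt_sq (by norm_num)]]
        exact Real.sqrt_le_sqrt hC4
      have hs2' : s ^ 2 = C := Real.sq_sqrt hCpos.le
      have hsqrt : Real.sqrt (y * (C * y)) = s * y := by
        rw [show y * (C * y) = C * y ^ 2 by ring, Real.sqrt_mul hCpos.le,
          Real.sqrt_sq hypos.le]
      rw [hΨy, hsqrt]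
      have hdpos : 0 < 2 * (s * y) - y := by nlinarith
      rw [div_lt_iff₀ hdpos]
      nlinarith [mul_pos hCpos hypos]
  exact key b ⟨hb, le_refl b⟩
end
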